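/- Let 𝕜 be a field, H and K Hopf algebras over 𝕜, S the antipode of K, and r : H ⊗ K → 𝕜 a linear map satisfying conditions (R1), (R2), (R3). Define linear maps c : H ⊗ K → K ⊗ H by c(h ⊗ k) = Σ r(h₍₁₎, k₍₁₎) · k₍₂₎ ⊗ h₍₂₎ and c̄ : K ⊗ H → H ⊗ K by c̄(k ⊗ h) = Σ r(h₍₁₎, S(k₍₁₎)) · h₍₂₎ ⊗ k₍₂₎. Then c̄ ∘ c = id_{H⊗K} and c ∘ c̄ = id_{K⊗H}; in particular c is a linear isomorphism with inverse c̄. -/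

import Mathlib

open TensorProduct

set_option maxHeartbeats 1000000
set_option synthInstance.maxHeartbeats 200000

open TensorProduct Coalgebra

section RformAux

variable {𝕜 : Type*} [Field 𝕜]

private lemma rform_aux_key {A V : Type*} [AddCommGroup A] [Module 𝕜 A] [Coalgebra 𝕜 A]
    [AddCommGroup V] [Module 𝕜 V]
    (f g : A →ₗ[𝕜] 𝕜) (v : A →ₗ[𝕜] V) {a : A} (ρ : Repr 𝕜 a (A × A))
    (ρ₁ : ∀ i, Repr 𝕜 (ρ.left i) (A × A)) (ρ₂ : ∀ i, Repr 𝕜 (ρ.right i) (A × A)) :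
    ∑ i ∈ ρ.index, ∑ j ∈ (ρ₁ i).index,
      (f ((ρ₁ i).left j) * g ((ρ₁ i).right j)) • v (ρ.right i)
    = ∑ i ∈ ρ.index, ∑ j ∈ (ρ₂ i).index,
      (f (ρ.left i) * g ((ρ₂ i).left j)) • v ((ρ₂ i).right j) := by
  have E := Coalgebra.sum_tmul_tmul_eq ρ ρ₁ ρ₂
  have := congrArg ((TensorProduct.lid 𝕜 V).toLinearMap ∘ₗ
      TensorProduct.map f ((TensorProduct.lid 𝕜 V).toLinearMap ∘ₗ TensorProduct.map g v)) E
  simpa [map_sum, smul_smul, mul_comm] using this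

private lemma rform_aux_counit_smul {A : Type*} [AddCommGroup A] [Module 𝕜 A] [Coalgebra 𝕜 A]
    {a : A} (ρ : Repr 𝕜 a (A × A)) :
    ∑ i ∈ ρ.index, Coalgebra.counit (R := 𝕜) (ρ.left i) • ρ.right i = a := by
  have := congrArg (TensorProduct.lid 𝕜 A) (Coalgebra.sum_counit_tmul_eq ρ)
  simp only [map_sum, TensorProduct.lid_tmul] at this
  simpa using this

private lemma rform_aux_collapse₁ {K : Type*} [Ring K] [HopfAlgebra 𝕜 K] {k : K} (ρ : Repr 𝕜 k (K × K))
    (ρ₁ : ∀ i, Repr 𝕜 (ρ.left i) (K × K)) (ρ₂ : ∀ i, Repr 𝕜 (ρ.right i) (K × K)) :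
    ∑ j ∈ ρ.index, ∑ j' ∈ (ρ₂ j).index,
      (ρ.left j * HopfAlgebra.antipode (R := 𝕜) ((ρ₂ j).left j')) ⊗ₜ[𝕜] (ρ₂ j).right j'
    = (1 : K) ⊗ₜ[𝕜] k := by
  have E := Coalgebra.sum_tmul_tmul_eq ρ ρ₁ ρ₂
  have h2 := congrArg (TensorProduct.map
      (LinearMap.mul' 𝕜 K ∘ₗ (HopfAlgebra.antipode (R := 𝕜) (A := K)).lTensor K) LinearMap.id
      ∘ₗ (TensorProduct.assoc 𝕜 K K K).symm.toLinearMap) E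
  simp only [map_sum, LinearMap.coe_comp, LinearEquiv.coe_coe, Function.comp_apply,
    TensorProduct.assoc_symm_tmul, TensorProduct.map_tmul, LinearMap.mul'_apply,
    LinearMap.lTensor_tmul, LinearMap.id_coe, id_eq] at h2
  rw [← h2]
  calc ∑ j ∈ ρ.index, ∑ j' ∈ (ρ₁ j).index,
        ((ρ₁ j).left j' * HopfAlgebra.antipode (R := 𝕜) ((ρ₁ j).right j')) ⊗ₜ[𝕜] ρ.right j
      = ∑ j ∈ ρ.index, (Coalgebra.counit (R := 𝕜) (ρ.left j) • (1 : K)) ⊗ₜ[𝕜] ρ.right j := by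
        refine Finset.sum_congr rfl fun j _ => ?_
        rw [← TensorProduct.sum_tmul, HopfAlgebra.sum_mul_antipode_eq_smul (ρ₁ j)]
    _ = (1 : K) ⊗ₜ[𝕜] k := by
        simp only [smul_tmul', smul_tmul]
        rw [← TensorProduct.tmul_sum]
        congr 1
        exact rform_aux_counit_smul ρ

private lemma rform_aux_collapse₂ {K : Type*} [Ring K] [HopfAlgebra 𝕜 K] {k : K} (ρ : Repr 𝕜 k (K × K))
    (ρ₁ : ∀ i, Repr 𝕜 (ρ.left i) (K × K)) (ρ₂ : ∀ i, Repr 𝕜 (ρ.right i) (K × K)) :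
    ∑ j ∈ ρ.index, ∑ j' ∈ (ρ₂ j).index,
      (HopfAlgebra.antipode (R := 𝕜) (ρ.left j) * (ρ₂ j).left j') ⊗ₜ[𝕜] (ρ₂ j).right j'
    = (1 : K) ⊗ₜ[𝕜] k := by
  have E := Coalgebra.sum_tmul_tmul_eq ρ ρ₁ ρ₂
  have h2 := congrArg (TensorProduct.map
      (LinearMap.mul' 𝕜 K ∘ₗ (HopfAlgebra.antipode (R := 𝕜) (A := K)).rTensor K) LinearMap.id
      ∘ₗ (TensorProduct.assoc 𝕜 K K K).symm.toLinearMap) E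
  simp only [map_sum, LinearMap.coe_comp, LinearEquiv.coe_coe, Function.comp_apply,
    TensorProduct.assoc_symm_tmul, TensorProduct.map_tmul, LinearMap.mul'_apply,
    LinearMap.rTensor_tmul, LinearMap.id_coe, id_eq] at h2
  rw [← h2]
  calc ∑ j ∈ ρ.index, ∑ j' ∈ (ρ₁ j).index,
        (HopfAlgebra.antipode (R := 𝕜) ((ρ₁ j).left j') * (ρ₁ j).right j') ⊗ₜ[𝕜] ρ.right j
      = ∑ j ∈ ρ.index, (Coalgebra.counit (R := 𝕜) (ρ.left j) • (1 : K)) ⊗ₜ[𝕜] ρ.right j := by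
        refine Finset.sum_congr rfl fun j _ => ?_
        rw [← TensorProduct.sum_tmul, HopfAlgebra.sum_antipode_mul_eq_smul (ρ₁ j)]
    _ = (1 : K) ⊗ₜ[𝕜] k := by
        simp only [smul_tmul', smul_tmul]
        rw [← TensorProduct.tmul_sum]
        congr 1
        exact rform_aux_counit_smul ρ

variable {H K : Type*} [Ring H] [Ring K] [HopfAlgebra 𝕜 H] [HopfAlgebra 𝕜 K]

private lemma rform_aux_hc (r : H ⊗[𝕜] K →ₗ[𝕜] 𝕜) (c : H ⊗[𝕜] K →ₗ[𝕜] K ⊗[𝕜] H)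
    (hc : ∀ (h : H) (k : K),
      c (h ⊗ₜ[𝕜] k)
        = (TensorProduct.lid 𝕜 (K ⊗[𝕜] H))
            (TensorProduct.map r (TensorProduct.comm 𝕜 H K).toLinearMap
              (TensorProduct.tensorTensorTensorComm 𝕜 H H K K
                ((Coalgebra.comul (R := 𝕜) h) ⊗ₜ[𝕜] (Coalgebra.comul (R := 𝕜) k)))))
    (h : H) (k : K) (rh : Repr 𝕜 h (H × H)) (rk : Repr 𝕜 k (K × K)) :
      c (h ⊗ₜ[𝕜] k) = ∑ i ∈ rh.index, ∑ j ∈ rk.index,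
        r (rh.left i ⊗ₜ[𝕜] rk.left j) • (rk.right j ⊗ₜ[𝕜] rh.right i) := by
  rw [hc, ← rh.eq, ← rk.eq]
  simp [TensorProduct.sum_tmul, TensorProduct.tmul_sum, map_sum]
  rw [Finset.sum_comm]

private lemma rform_aux_hcbar (r : H ⊗[𝕜] K →ₗ[𝕜] 𝕜) (cbar : K ⊗[𝕜] H →ₗ[𝕜] H ⊗[𝕜] K)
    (hcbar : ∀ (k : K) (h : H),
      cbar (k ⊗ₜ[𝕜] h)
        = (TensorProduct.lid 𝕜 (H ⊗[𝕜] K))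
            (TensorProduct.map
              (r ∘ₗ TensorProduct.map (LinearMap.id : H →ₗ[𝕜] H)
                  (HopfAlgebra.antipode (R := 𝕜) (A := K))
                ∘ₗ (TensorProduct.comm 𝕜 K H).toLinearMap)
              (TensorProduct.comm 𝕜 K H).toLinearMap
              (TensorProduct.tensorTensorTensorComm 𝕜 K K H H
                ((Coalgebra.comul (R := 𝕜) k) ⊗ₜ[𝕜] (Coalgebra.comul (R := 𝕜) h)))))
    (k : K) (h : H) (rk : Repr 𝕜 k (K × K)) (rh : Repr 𝕜 h (H × H)) :
      cbar (k ⊗ₜ[𝕜] h) = ∑ j ∈ rk.index, ∑ i ∈ rh.index,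
        r (rh.left i ⊗ₜ[𝕜] HopfAlgebra.antipode (R := 𝕜) (rk.left j))
          • (rh.right i ⊗ₜ[𝕜] rk.right j) := by
  rw [hcbar, ← rh.eq, ← rk.eq]
  simp [TensorProduct.sum_tmul, TensorProduct.tmul_sum, map_sum]
  rw [Finset.sum_comm]

private lemma rform_aux_hR2 (r : H ⊗[𝕜] K →ₗ[𝕜] 𝕜)
    (hR2 : ∀ (h : H) (k k' : K),
      r (h ⊗ₜ[𝕜] (k * k'))
        = LinearMap.mul' 𝕜 𝕜 (TensorProduct.map
            (r ∘ₗ (TensorProduct.mk 𝕜 H K).flip k) (r ∘ₗ (TensorProduct.mk 𝕜 H K).flip k')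
            (Coalgebra.comul (R := 𝕜) h)))
    (h : H) (ρ : Repr 𝕜 h (H × H)) (A B : K) :
      ∑ i ∈ ρ.index, r (ρ.left i ⊗ₜ[𝕜] A) * r (ρ.right i ⊗ₜ[𝕜] B)
        = r (h ⊗ₜ[𝕜] (A * B)) := by
  rw [hR2 h A B, ← ρ.eq]
  simp [map_sum, LinearMap.mul'_apply]

end RformAux

/-- Let `H, K` be Hopf algebras over a field `𝕜`, `S` the antipode of `K`, and
`r : H ⊗ K → 𝕜` a linear map satisfying the relative r-form axioms (R1), (R2), (R3).
Let `c : H ⊗ K → K ⊗ H` be the linear map `c(h ⊗ k) = Σ r(h₍₁₎, k₍₁₎) · k₍₂₎ ⊗ h₍₂₎`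
and `c̄ : K ⊗ H → H ⊗ K` the linear map `c̄(k ⊗ h) = Σ r(h₍₁₎, S(k₍₁₎)) · h₍₂₎ ⊗ k₍₂₎`.
Then `c̄ ∘ c = id` and `c ∘ c̄ = id`; in particular `c` is a linear isomorphism with
inverse `c̄`. -/
theorem relative_rform_half_braiding_invertible
    {𝕜 : Type*} [Field 𝕜] {H K : Type*} [Ring H] [Ring K]
    [HopfAlgebra 𝕜 H] [HopfAlgebra 𝕜 K]
    (r : H ⊗[𝕜] K →ₗ[𝕜] 𝕜)
    -- (R1): r(hh', k) = Σ r(h', k₍₁₎)·r(h, k₍₂₎)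
    (hR1 : ∀ (h h' : H) (k : K),
      r ((h * h') ⊗ₜ[𝕜] k)
        = LinearMap.mul' 𝕜 𝕜 (TensorProduct.map
            (r ∘ₗ TensorProduct.mk 𝕜 H K h') (r ∘ₗ TensorProduct.mk 𝕜 H K h)
            (Coalgebra.comul (R := 𝕜) k)))
    -- (R2): r(h, kk') = Σ r(h₍₁₎, k)·r(h₍₂₎, k')
    (hR2 : ∀ (h : H) (k k' : K),
      r (h ⊗ₜ[𝕜] (k * k'))
        = LinearMap.mul' 𝕜 𝕜 (TensorProduct.map
            (r ∘ₗ (TensorProduct.mk 𝕜 H K).flip k) (r ∘ₗ (TensorProduct.mk 𝕜 H K).flip k')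
            (Coalgebra.comul (R := 𝕜) h)))
    -- (R3): r(h,1) = ε(h), r(1,k) = ε(k)
    (hR3l : ∀ h : H, r (h ⊗ₜ[𝕜] (1 : K)) = Coalgebra.counit (R := 𝕜) h)
    (hR3r : ∀ k : K, r ((1 : H) ⊗ₜ[𝕜] k) = Coalgebra.counit (R := 𝕜) k)
    -- the half-braiding c(h ⊗ k) = Σ r(h₍₁₎, k₍₁₎) · k₍₂₎ ⊗ h₍₂₎
    (c : H ⊗[𝕜] K →ₗ[𝕜] K ⊗[𝕜] H)
    (hc : ∀ (h : H) (k : K),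
      c (h ⊗ₜ[𝕜] k)
        = (TensorProduct.lid 𝕜 (K ⊗[𝕜] H))
            (TensorProduct.map r (TensorProduct.comm 𝕜 H K).toLinearMap
              (TensorProduct.tensorTensorTensorComm 𝕜 H H K K
                ((Coalgebra.comul (R := 𝕜) h) ⊗ₜ[𝕜] (Coalgebra.comul (R := 𝕜) k)))))
    -- the claimed inverse c̄(k ⊗ h) = Σ r(h₍₁₎, S(k₍₁₎)) · h₍₂₎ ⊗ k₍₂₎
    (cbar : K ⊗[𝕜] H →ₗ[𝕜] H ⊗[𝕜] K)
    (hcbar : ∀ (k : K) (h : H),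
      cbar (k ⊗ₜ[𝕜] h)
        = (TensorProduct.lid 𝕜 (H ⊗[𝕜] K))
            (TensorProduct.map
              (r ∘ₗ TensorProduct.map (LinearMap.id : H →ₗ[𝕜] H)
                  (HopfAlgebra.antipode (R := 𝕜) (A := K))
                ∘ₗ (TensorProduct.comm 𝕜 K H).toLinearMap)
              (TensorProduct.comm 𝕜 K H).toLinearMap
              (TensorProduct.tensorTensorTensorComm 𝕜 K K H H
                ((Coalgebra.comul (R := 𝕜) k) ⊗ₜ[𝕜] (Coalgebra.comul (R := 𝕜) h))))) :
    cbar ∘ₗ c = LinearMap.id ∧ c ∘ₗ cbar = LinearMap.id := by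
  constructor
  · apply TensorProduct.ext'
    intro h k
    simp only [LinearMap.comp_apply, LinearMap.id_apply]
    rw [rform_aux_hc r c hc h k (ℛ 𝕜 h) (ℛ 𝕜 k)]
    calc cbar (∑ i ∈ (ℛ 𝕜 h).index, ∑ j ∈ (ℛ 𝕜 k).index,
            r ((ℛ 𝕜 h).left i ⊗ₜ[𝕜] (ℛ 𝕜 k).left j)
              • ((ℛ 𝕜 k).right j ⊗ₜ[𝕜] (ℛ 𝕜 h).right i))
        = ∑ i ∈ (ℛ 𝕜 h).index, ∑ j ∈ (ℛ 𝕜 k).index,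
            r ((ℛ 𝕜 h).left i ⊗ₜ[𝕜] (ℛ 𝕜 k).left j) •
            ∑ j' ∈ (ℛ 𝕜 ((ℛ 𝕜 k).right j)).index, ∑ i' ∈ (ℛ 𝕜 ((ℛ 𝕜 h).right i)).index,
              r ((ℛ 𝕜 ((ℛ 𝕜 h).right i)).left i' ⊗ₜ[𝕜]
                  HopfAlgebra.antipode (R := 𝕜) ((ℛ 𝕜 ((ℛ 𝕜 k).right j)).left j'))
                • ((ℛ 𝕜 ((ℛ 𝕜 h).right i)).right i' ⊗ₜ[𝕜] (ℛ 𝕜 ((ℛ 𝕜 k).right j)).right j') := by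
          rw [map_sum]
          refine Finset.sum_congr rfl fun i _ => ?_
          rw [map_sum]
          refine Finset.sum_congr rfl fun j _ => ?_
          rw [map_smul, rform_aux_hcbar r cbar hcbar _ _ (ℛ 𝕜 ((ℛ 𝕜 k).right j)) (ℛ 𝕜 ((ℛ 𝕜 h).right i))]
      _ = ∑ j ∈ (ℛ 𝕜 k).index, ∑ j' ∈ (ℛ 𝕜 ((ℛ 𝕜 k).right j)).index,
            ∑ i ∈ (ℛ 𝕜 h).index, ∑ i' ∈ (ℛ 𝕜 ((ℛ 𝕜 h).right i)).index,
            (r ((ℛ 𝕜 h).left i ⊗ₜ[𝕜] (ℛ 𝕜 k).left j) *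
              r ((ℛ 𝕜 ((ℛ 𝕜 h).right i)).left i' ⊗ₜ[𝕜]
                  HopfAlgebra.antipode (R := 𝕜) ((ℛ 𝕜 ((ℛ 𝕜 k).right j)).left j')))
                • ((ℛ 𝕜 ((ℛ 𝕜 h).right i)).right i' ⊗ₜ[𝕜] (ℛ 𝕜 ((ℛ 𝕜 k).right j)).right j') := by
          simp only [Finset.smul_sum, smul_smul]
          rw [Finset.sum_comm]
          refine Finset.sum_congr rfl fun j _ => ?_
          rw [Finset.sum_comm]
      _ = ∑ j ∈ (ℛ 𝕜 k).index, ∑ j' ∈ (ℛ 𝕜 ((ℛ 𝕜 k).right j)).index,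
            ∑ i ∈ (ℛ 𝕜 h).index, ∑ i' ∈ (ℛ 𝕜 ((ℛ 𝕜 h).left i)).index,
            (r ((ℛ 𝕜 ((ℛ 𝕜 h).left i)).left i' ⊗ₜ[𝕜] (ℛ 𝕜 k).left j) *
              r ((ℛ 𝕜 ((ℛ 𝕜 h).left i)).right i' ⊗ₜ[𝕜]
                  HopfAlgebra.antipode (R := 𝕜) ((ℛ 𝕜 ((ℛ 𝕜 k).right j)).left j')))
                • ((ℛ 𝕜 h).right i ⊗ₜ[𝕜] (ℛ 𝕜 ((ℛ 𝕜 k).right j)).right j') := by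
          refine Finset.sum_congr rfl fun j _ => Finset.sum_congr rfl fun j' _ => ?_
          have := rform_aux_key
            (r ∘ₗ (TensorProduct.mk 𝕜 H K).flip ((ℛ 𝕜 k).left j))
            (r ∘ₗ (TensorProduct.mk 𝕜 H K).flip
              (HopfAlgebra.antipode (R := 𝕜) ((ℛ 𝕜 ((ℛ 𝕜 k).right j)).left j')))
            ((TensorProduct.mk 𝕜 H K).flip ((ℛ 𝕜 ((ℛ 𝕜 k).right j)).right j'))
            (ℛ 𝕜 h) (fun i => ℛ 𝕜 ((ℛ 𝕜 h).left i)) (fun i => ℛ 𝕜 ((ℛ 𝕜 h).right i))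
          simpa using this.symm
      _ = ∑ j ∈ (ℛ 𝕜 k).index, ∑ j' ∈ (ℛ 𝕜 ((ℛ 𝕜 k).right j)).index,
            ∑ i ∈ (ℛ 𝕜 h).index,
            r ((ℛ 𝕜 h).left i ⊗ₜ[𝕜] ((ℛ 𝕜 k).left j *
                  HopfAlgebra.antipode (R := 𝕜) ((ℛ 𝕜 ((ℛ 𝕜 k).right j)).left j')))
                • ((ℛ 𝕜 h).right i ⊗ₜ[𝕜] (ℛ 𝕜 ((ℛ 𝕜 k).right j)).right j') := by
          refine Finset.sum_congr rfl fun j _ => Finset.sum_congr rfl fun j' _ =>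
            Finset.sum_congr rfl fun i _ => ?_
          rw [← Finset.sum_smul, rform_aux_hR2 r hR2 ((ℛ 𝕜 h).left i) (ℛ 𝕜 ((ℛ 𝕜 h).left i))]
      _ = ∑ i ∈ (ℛ 𝕜 h).index, ∑ j ∈ (ℛ 𝕜 k).index, ∑ j' ∈ (ℛ 𝕜 ((ℛ 𝕜 k).right j)).index,
            r ((ℛ 𝕜 h).left i ⊗ₜ[𝕜] ((ℛ 𝕜 k).left j *
                  HopfAlgebra.antipode (R := 𝕜) ((ℛ 𝕜 ((ℛ 𝕜 k).right j)).left j')))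
                • ((ℛ 𝕜 h).right i ⊗ₜ[𝕜] (ℛ 𝕜 ((ℛ 𝕜 k).right j)).right j') := by
          rw [Finset.sum_comm]
          refine Finset.sum_congr rfl fun i _ => ?_
          rw [Finset.sum_comm]
      _ = ∑ i ∈ (ℛ 𝕜 h).index,
            Coalgebra.counit (R := 𝕜) ((ℛ 𝕜 h).left i) • ((ℛ 𝕜 h).right i ⊗ₜ[𝕜] k) := by
          refine Finset.sum_congr rfl fun i _ => ?_
          have coll := rform_aux_collapse₁ (ℛ 𝕜 k)
            (fun j => ℛ 𝕜 ((ℛ 𝕜 k).left j)) (fun j => ℛ 𝕜 ((ℛ 𝕜 k).right j))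
          have := congrArg ((TensorProduct.lid 𝕜 (H ⊗[𝕜] K)).toLinearMap ∘ₗ
            TensorProduct.map (r ∘ₗ TensorProduct.mk 𝕜 H K ((ℛ 𝕜 h).left i))
              (TensorProduct.mk 𝕜 H K ((ℛ 𝕜 h).right i))) coll
          simp only [map_sum, LinearMap.coe_comp, LinearEquiv.coe_coe, Function.comp_apply,
            TensorProduct.map_tmul, TensorProduct.mk_apply, TensorProduct.lid_tmul] at this
          rw [this, hR3l]
      _ = h ⊗ₜ[𝕜] k := by
          simp only [smul_tmul']
          rw [← TensorProduct.sum_tmul, rform_aux_counit_smul]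
  · apply TensorProduct.ext'
    intro k h
    simp only [LinearMap.comp_apply, LinearMap.id_apply]
    rw [rform_aux_hcbar r cbar hcbar k h (ℛ 𝕜 k) (ℛ 𝕜 h)]
    calc c (∑ j ∈ (ℛ 𝕜 k).index, ∑ i ∈ (ℛ 𝕜 h).index,
            r ((ℛ 𝕜 h).left i ⊗ₜ[𝕜] HopfAlgebra.antipode (R := 𝕜) ((ℛ 𝕜 k).left j))
              • ((ℛ 𝕜 h).right i ⊗ₜ[𝕜] (ℛ 𝕜 k).right j))
        = ∑ j ∈ (ℛ 𝕜 k).index, ∑ i ∈ (ℛ 𝕜 h).index,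
            r ((ℛ 𝕜 h).left i ⊗ₜ[𝕜] HopfAlgebra.antipode (R := 𝕜) ((ℛ 𝕜 k).left j)) •
            ∑ i' ∈ (ℛ 𝕜 ((ℛ 𝕜 h).right i)).index, ∑ j' ∈ (ℛ 𝕜 ((ℛ 𝕜 k).right j)).index,
              r ((ℛ 𝕜 ((ℛ 𝕜 h).right i)).left i' ⊗ₜ[𝕜] (ℛ 𝕜 ((ℛ 𝕜 k).right j)).left j')
                • ((ℛ 𝕜 ((ℛ 𝕜 k).right j)).right j' ⊗ₜ[𝕜] (ℛ 𝕜 ((ℛ 𝕜 h).right i)).right i') := by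
          rw [map_sum]
          refine Finset.sum_congr rfl fun j _ => ?_
          rw [map_sum]
          refine Finset.sum_congr rfl fun i _ => ?_
          rw [map_smul, rform_aux_hc r c hc _ _ (ℛ 𝕜 ((ℛ 𝕜 h).right i)) (ℛ 𝕜 ((ℛ 𝕜 k).right j))]
      _ = ∑ j ∈ (ℛ 𝕜 k).index, ∑ i ∈ (ℛ 𝕜 h).index,
            ∑ j' ∈ (ℛ 𝕜 ((ℛ 𝕜 k).right j)).index, ∑ i' ∈ (ℛ 𝕜 ((ℛ 𝕜 h).right i)).index,
            (r ((ℛ 𝕜 h).left i ⊗ₜ[𝕜] HopfAlgebra.antipode (R := 𝕜) ((ℛ 𝕜 k).left j)) *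
              r ((ℛ 𝕜 ((ℛ 𝕜 h).right i)).left i' ⊗ₜ[𝕜] (ℛ 𝕜 ((ℛ 𝕜 k).right j)).left j'))
                • ((ℛ 𝕜 ((ℛ 𝕜 k).right j)).right j' ⊗ₜ[𝕜] (ℛ 𝕜 ((ℛ 𝕜 h).right i)).right i') := by
          simp only [Finset.smul_sum, smul_smul]
          exact Finset.sum_congr rfl fun j _ => Finset.sum_congr rfl fun i _ =>
            Finset.sum_comm
      _ = ∑ j ∈ (ℛ 𝕜 k).index, ∑ j' ∈ (ℛ 𝕜 ((ℛ 𝕜 k).right j)).index,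
            ∑ i ∈ (ℛ 𝕜 h).index, ∑ i' ∈ (ℛ 𝕜 ((ℛ 𝕜 h).right i)).index,
            (r ((ℛ 𝕜 h).left i ⊗ₜ[𝕜] HopfAlgebra.antipode (R := 𝕜) ((ℛ 𝕜 k).left j)) *
              r ((ℛ 𝕜 ((ℛ 𝕜 h).right i)).left i' ⊗ₜ[𝕜] (ℛ 𝕜 ((ℛ 𝕜 k).right j)).left j'))
                • ((ℛ 𝕜 ((ℛ 𝕜 k).right j)).right j' ⊗ₜ[𝕜] (ℛ 𝕜 ((ℛ 𝕜 h).right i)).right i') := by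
          exact Finset.sum_congr rfl fun j _ => Finset.sum_comm
      _ = ∑ j ∈ (ℛ 𝕜 k).index, ∑ j' ∈ (ℛ 𝕜 ((ℛ 𝕜 k).right j)).index,
            ∑ i ∈ (ℛ 𝕜 h).index, ∑ i' ∈ (ℛ 𝕜 ((ℛ 𝕜 h).left i)).index,
            (r ((ℛ 𝕜 ((ℛ 𝕜 h).left i)).left i' ⊗ₜ[𝕜]
                HopfAlgebra.antipode (R := 𝕜) ((ℛ 𝕜 k).left j)) *
              r ((ℛ 𝕜 ((ℛ 𝕜 h).left i)).right i' ⊗ₜ[𝕜] (ℛ 𝕜 ((ℛ 𝕜 k).right j)).left j'))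
                • ((ℛ 𝕜 ((ℛ 𝕜 k).right j)).right j' ⊗ₜ[𝕜] (ℛ 𝕜 h).right i) := by
          refine Finset.sum_congr rfl fun j _ => Finset.sum_congr rfl fun j' _ => ?_
          have := rform_aux_key
            (r ∘ₗ (TensorProduct.mk 𝕜 H K).flip
              (HopfAlgebra.antipode (R := 𝕜) ((ℛ 𝕜 k).left j)))
            (r ∘ₗ (TensorProduct.mk 𝕜 H K).flip ((ℛ 𝕜 ((ℛ 𝕜 k).right j)).left j'))
            (TensorProduct.mk 𝕜 K H ((ℛ 𝕜 ((ℛ 𝕜 k).right j)).right j'))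
            (ℛ 𝕜 h) (fun i => ℛ 𝕜 ((ℛ 𝕜 h).left i)) (fun i => ℛ 𝕜 ((ℛ 𝕜 h).right i))
          simpa using this.symm
      _ = ∑ j ∈ (ℛ 𝕜 k).index, ∑ j' ∈ (ℛ 𝕜 ((ℛ 𝕜 k).right j)).index,
            ∑ i ∈ (ℛ 𝕜 h).index,
            r ((ℛ 𝕜 h).left i ⊗ₜ[𝕜] (HopfAlgebra.antipode (R := 𝕜) ((ℛ 𝕜 k).left j) *
                  (ℛ 𝕜 ((ℛ 𝕜 k).right j)).left j'))
                • ((ℛ 𝕜 ((ℛ 𝕜 k).right j)).right j' ⊗ₜ[𝕜] (ℛ 𝕜 h).right i) := by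
          refine Finset.sum_congr rfl fun j _ => Finset.sum_congr rfl fun j' _ =>
            Finset.sum_congr rfl fun i _ => ?_
          rw [← Finset.sum_smul, rform_aux_hR2 r hR2 ((ℛ 𝕜 h).left i) (ℛ 𝕜 ((ℛ 𝕜 h).left i))]
      _ = ∑ i ∈ (ℛ 𝕜 h).index, ∑ j ∈ (ℛ 𝕜 k).index, ∑ j' ∈ (ℛ 𝕜 ((ℛ 𝕜 k).right j)).index,
            r ((ℛ 𝕜 h).left i ⊗ₜ[𝕜] (HopfAlgebra.antipode (R := 𝕜) ((ℛ 𝕜 k).left j) *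
                  (ℛ 𝕜 ((ℛ 𝕜 k).right j)).left j'))
                • ((ℛ 𝕜 ((ℛ 𝕜 k).right j)).right j' ⊗ₜ[𝕜] (ℛ 𝕜 h).right i) := by
          rw [Finset.sum_comm]
          refine Finset.sum_congr rfl fun i _ => ?_
          rw [Finset.sum_comm]
      _ = ∑ i ∈ (ℛ 𝕜 h).index,
            Coalgebra.counit (R := 𝕜) ((ℛ 𝕜 h).left i) • (k ⊗ₜ[𝕜] (ℛ 𝕜 h).right i) := by
          refine Finset.sum_congr rfl fun i _ => ?_
          have coll := rform_aux_collapse₂ (ℛ 𝕜 k)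
            (fun j => ℛ 𝕜 ((ℛ 𝕜 k).left j)) (fun j => ℛ 𝕜 ((ℛ 𝕜 k).right j))
          have := congrArg ((TensorProduct.lid 𝕜 (K ⊗[𝕜] H)).toLinearMap ∘ₗ
            TensorProduct.map (r ∘ₗ TensorProduct.mk 𝕜 H K ((ℛ 𝕜 h).left i))
              ((TensorProduct.mk 𝕜 K H).flip ((ℛ 𝕜 h).right i))) coll
          simp only [map_sum, LinearMap.coe_comp, LinearEquiv.coe_coe, Function.comp_apply,
            TensorProduct.map_tmul, TensorProduct.mk_apply, LinearMap.flip_apply,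
            TensorProduct.lid_tmul] at this
          rw [this, hR3l]
      _ = k ⊗ₜ[𝕜] h := by
          simp only [← TensorProduct.tmul_smul]
          rw [← TensorProduct.tmul_sum, rform_aux_counit_smul]
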